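/- Let n ≥ 4 be even and M ≥ 3 with Mn ≡ 0 (mod 4). Then the 6-regular Cayley graph cay(ℤ_M × ℤ_n, {(1, n/2 − 1), (1, n/2), (1, n/2 + 1)}) is connected. -/

import Mathlib

/-- The Cayley graph of an additive group `Γ` with connection set `S`. -/
def cayleyGraph (Γ : Type*) [AddCommGroup Γ] (S : Set Γ) : SimpleGraph Γ :=
  SimpleGraph.fromRel (fun a b => b - a ∈ S)

/-- For even `n ≥ 4` and `M ≥ 3` with `Mn ≡ 0 (mod 4)`, the 6-regular
Cayley graph `cay(ℤ_M × ℤ_n, {(1, n/2 − 1), (1, n/2), (1, n/2 + 1)})` is connected. -/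
theorem stmt_19 (M n : ℕ) (hM : 3 ≤ M) (hn : 4 ≤ n) (hne : Even n)
    (h4 : M * n % 4 = 0) :
    (cayleyGraph (ZMod M × ZMod n)
      {((1 : ZMod M), ((n / 2 : ℕ) : ZMod n) - 1),
       ((1 : ZMod M), ((n / 2 : ℕ) : ZMod n)),
       ((1 : ZMod M), ((n / 2 : ℕ) : ZMod n) + 1)}).Connected := by
  haveI : Fact (1 < M) := ⟨by omega⟩
  haveI : NeZero M := ⟨by omega⟩
  haveI : NeZero n := ⟨by omega⟩
  set c : ZMod n := ((n / 2 : ℕ) : ZMod n) with hc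
  set S : Set (ZMod M × ZMod n) :=
    {((1 : ZMod M), c - 1), ((1 : ZMod M), c), ((1 : ZMod M), c + 1)} with hS
  set G := cayleyGraph (ZMod M × ZMod n) S with hG
  have hone : (1 : ZMod M) ≠ 0 := one_ne_zero
  have hadj : ∀ (v g : ZMod M × ZMod n), g ∈ S → G.Adj v (v + g) := by
    intro v g hg
    have hg0 : g ≠ 0 := by
      rcases hg with h | h | h <;> subst h <;>
        simp [Prod.ext_iff, hone]
    have hne' : v ≠ v + g := fun h => hg0 (by simpa using (left_eq_add.mp h))
    refine ⟨hne', Or.inl ?_⟩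
    simpa using hg
  have r2 : ∀ v : ZMod M × ZMod n, G.Reachable v (v + ((1 : ZMod M), c)) :=
    fun v => (hadj v _ (by simp [hS])).reachable
  have r1 : ∀ v : ZMod M × ZMod n, G.Reachable v (v + ((0 : ZMod M), (1 : ZMod n))) := by
    intro v
    have h1 : G.Adj v (v + ((1 : ZMod M), c + 1)) := hadj v _ (by simp [hS])
    have h2 : G.Adj (v + ((0 : ZMod M), (1 : ZMod n)))
        (v + ((0 : ZMod M), (1 : ZMod n)) + ((1 : ZMod M), c)) :=
      hadj _ ((1 : ZMod M), c) (by simp [hS])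
    have e : v + ((0 : ZMod M), (1 : ZMod n)) + ((1 : ZMod M), c)
        = v + ((1 : ZMod M), c + 1) := by
      rw [add_assoc, Prod.mk_add_mk, Prod.ext_iff]
      constructor <;> simp <;> ring
    rw [e] at h2
    exact h1.reachable.trans h2.reachable.symm
  have rb : ∀ (v : ZMod M × ZMod n) (b : ℕ),
      G.Reachable v (v + ((0 : ZMod M), (b : ZMod n))) := by
    intro v b
    induction b with
    | zero => simpa [Prod.mk_zero_zero] using SimpleGraph.Reachable.refl v
    | succ b ih =>
      have h := r1 (v + ((0 : ZMod M), (b : ZMod n)))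
      have e : v + ((0 : ZMod M), (b : ZMod n)) + ((0 : ZMod M), (1 : ZMod n))
          = v + ((0 : ZMod M), ((b + 1 : ℕ) : ZMod n)) := by
        rw [add_assoc, Prod.mk_add_mk, Prod.ext_iff]
        constructor <;> push_cast <;> simp
      rw [e] at h
      exact ih.trans h
  have ra : ∀ a : ℕ, G.Reachable 0 (((a : ZMod M), (a : ZMod n) * c)) := by
    intro a
    induction a with
    | zero => simpa [Prod.mk_zero_zero] using SimpleGraph.Reachable.refl (0 : ZMod M × ZMod n)
    | succ a ih =>
      have h := r2 ((a : ZMod M), (a : ZMod n) * c)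
      have e : ((a : ZMod M), (a : ZMod n) * c) + ((1 : ZMod M), c)
          = (((a + 1 : ℕ) : ZMod M), ((a + 1 : ℕ) : ZMod n) * c) := by
        rw [Prod.mk_add_mk, Prod.ext_iff]
        constructor <;> push_cast <;> ring
      rw [e] at h
      exact ih.trans h
  have key : ∀ v : ZMod M × ZMod n, G.Reachable 0 v := by
    rintro ⟨x, y⟩
    have hx : ((x.val : ℕ) : ZMod M) = x := ZMod.natCast_rightInverse x
    have hd : (((y - (x.val : ZMod n) * c).val : ℕ) : ZMod n)
        = y - (x.val : ZMod n) * c := ZMod.natCast_rightInverse _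
    have h := rb (((x.val : ℕ) : ZMod M), ((x.val : ℕ) : ZMod n) * c)
      (y - (x.val : ZMod n) * c).val
    have e : (((x.val : ℕ) : ZMod M), ((x.val : ℕ) : ZMod n) * c)
        + ((0 : ZMod M), (((y - (x.val : ZMod n) * c).val : ℕ) : ZMod n)) = (x, y) := by
      rw [Prod.mk_add_mk, hd, Prod.ext_iff]
      exact ⟨by rw [add_zero, hx], by ring⟩
    rw [e] at h
    exact (ra x.val).trans h
  constructor
  intro u v
  exact (key u).symm.trans (key v)
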